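/- Let φ: M → G be a monoid homomorphism from the free monoid M on a set E to a group G, and suppose φ(ē) = φ(e)^{-1} for an involution e ↦ ē on E. If x ∈ M satisfies φ(x) = 1 in the free group F on E under the induced map (i.e., the image of x in F is trivial), then x can be transformed into a word of the form (ū_1 u_1)(ū_2 u_2)⋯(ū_q u_q) by finitely many insertions of subwords ē e with e ∈ E, where ū denotes the reversed barred word. -/
import Mathlib


open FreeMonoid

/-- The anti-involution on the free monoid: reverse the word and bar each letter. -/
def barWord {E : Type*} (bar : E → E) (x : FreeMonoid E) : FreeMonoid E :=
  FreeMonoid.ofList ((FreeMonoid.toList x).reverse.map bar)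

/-- One step of deletion of an adjacent pair `e ē` (with `bar` an involution
this also covers pairs `ē e`); a word maps to `1` in the free group `F`
precisely when it reduces to the empty word by such cancellations. -/
def DelStep {E : Type*} (bar : E → E) (y y' : FreeMonoid E) : Prop :=
  ∃ (a b : FreeMonoid E) (e : E),
    y = a * (FreeMonoid.of e * FreeMonoid.of (bar e)) * b ∧ y' = a * b

/-- One step of insertion of a subword `ē e`. -/
def InsStep {E : Type*} (bar : E → E) (y y' : FreeMonoid E) : Prop :=
  ∃ (a b : FreeMonoid E) (e : E),
    y = a * b ∧ y' = a * (FreeMonoid.of (bar e) * FreeMonoid.of e) * b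

section Aux

variable {E : Type*} (bar : E → E)

lemma freeMonoid_ext {x y : FreeMonoid E} (h : FreeMonoid.toList x = FreeMonoid.toList y) :
    x = y := FreeMonoid.toList.injective h

lemma barWord_one : barWord bar (1 : FreeMonoid E) = 1 := rfl

lemma barWord_of (e : E) : barWord bar (FreeMonoid.of e) = FreeMonoid.of (bar e) := rfl

lemma barWord_mul (x y : FreeMonoid E) :
    barWord bar (x * y) = barWord bar y * barWord bar x := by
  apply freeMonoid_ext
  simp [barWord, FreeMonoid.toList_mul]

/-- abbreviation for the goal form -/
def good (L : List (FreeMonoid E)) : FreeMonoid E :=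
  (L.map (fun u => barWord bar u * u)).prod

lemma good_append (L₁ L₂ : List (FreeMonoid E)) :
    good bar (L₁ ++ L₂) = good bar L₁ * good bar L₂ := by
  simp [good]

lemma insStep_mul_left (c : FreeMonoid E) {y y' : FreeMonoid E} (h : InsStep bar y y') :
    InsStep bar (c * y) (c * y') := by
  obtain ⟨a, b, e, rfl, rfl⟩ := h
  exact ⟨c * a, b, e, by rw [mul_assoc], by simp only [mul_assoc]⟩

lemma insStep_mul_right (c : FreeMonoid E) {y y' : FreeMonoid E} (h : InsStep bar y y') :
    InsStep bar (y * c) (y' * c) := by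
  obtain ⟨a, b, e, rfl, rfl⟩ := h
  exact ⟨a, b * c, e, by simp only [mul_assoc], by simp only [mul_assoc]⟩

lemma ins_rtg_mul_left (c : FreeMonoid E) {y y' : FreeMonoid E}
    (h : Relation.ReflTransGen (InsStep bar) y y') :
    Relation.ReflTransGen (InsStep bar) (c * y) (c * y') := by
  induction h with
  | refl => exact Relation.ReflTransGen.refl
  | tail _ hstep ih => exact ih.tail (insStep_mul_left bar c hstep)

lemma ins_rtg_mul_right (c : FreeMonoid E) {y y' : FreeMonoid E}
    (h : Relation.ReflTransGen (InsStep bar) y y') :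
    Relation.ReflTransGen (InsStep bar) (y * c) (y' * c) := by
  induction h with
  | refl => exact Relation.ReflTransGen.refl
  | tail _ hstep ih => exact ih.tail (insStep_mul_right bar c hstep)

lemma ins_rtg_mul {x x' y y' : FreeMonoid E}
    (hx : Relation.ReflTransGen (InsStep bar) x x')
    (hy : Relation.ReflTransGen (InsStep bar) y y') :
    Relation.ReflTransGen (InsStep bar) (x * y) (x' * y') :=
  (ins_rtg_mul_right bar y hx).trans (ins_rtg_mul_left bar x' hy)

/-- Conjugating a good word by a letter can be fixed up by insertions. -/
lemma conj_good (hbar : ∀ e, bar (bar e) = e) (L : List (FreeMonoid E)) (e : E) :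
    ∃ L' : List (FreeMonoid E),
      Relation.ReflTransGen (InsStep bar)
        (FreeMonoid.of e * good bar L * FreeMonoid.of (bar e)) (good bar L') := by
  induction L with
  | nil =>
    refine ⟨[FreeMonoid.of (bar e)], ?_⟩
    have : FreeMonoid.of e * good bar ([] : List (FreeMonoid E)) * FreeMonoid.of (bar e)
        = good bar [FreeMonoid.of (bar e)] := by
      simp [good, barWord_of, hbar e]
    rw [this]
  | cons u rest ih =>
    obtain ⟨L'', hL''⟩ := ih
    refine ⟨(u * FreeMonoid.of (bar e)) :: L'', ?_⟩
    -- start : e * (ū u) * good rest * ē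
    -- one insertion of ē e after (e ū u) gives (e ū u ē) * (e * good rest * ē)
    have step1 : InsStep bar
        (FreeMonoid.of e * good bar (u :: rest) * FreeMonoid.of (bar e))
        ((FreeMonoid.of e * (barWord bar u * u) * FreeMonoid.of (bar e)) *
          (FreeMonoid.of e * good bar rest * FreeMonoid.of (bar e))) := by
      refine ⟨FreeMonoid.of e * (barWord bar u * u),
        good bar rest * FreeMonoid.of (bar e), e, ?_, ?_⟩
      · simp only [good, List.map_cons, List.prod_cons, mul_assoc]
      · simp only [mul_assoc]
    have hpiece : FreeMonoid.of e * (barWord bar u * u) * FreeMonoid.of (bar e)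
        = barWord bar (u * FreeMonoid.of (bar e)) * (u * FreeMonoid.of (bar e)) := by
      rw [barWord_mul, barWord_of, hbar e]
      simp only [mul_assoc]
    have : good bar ((u * FreeMonoid.of (bar e)) :: L'')
        = (barWord bar (u * FreeMonoid.of (bar e)) * (u * FreeMonoid.of (bar e))) *
          good bar L'' := by
      simp [good]
    rw [this, ← hpiece]
    exact (Relation.ReflTransGen.single step1).trans
      (ins_rtg_mul_left bar _ hL'')

/-- Splitting lemma: if `x` reduces to `1` and starts with `e`, then
`x = e s ē t` with `s`, `t` reducing to `1`. -/
lemma split_lemma {x : FreeMonoid E} (h : Relation.ReflTransGen (DelStep bar) x 1) :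
    ∀ (e : E) (r : FreeMonoid E), x = FreeMonoid.of e * r →
      ∃ s t : FreeMonoid E, r = s * FreeMonoid.of (bar e) * t ∧
        Relation.ReflTransGen (DelStep bar) s 1 ∧
        Relation.ReflTransGen (DelStep bar) t 1 := by
  induction h using Relation.ReflTransGen.head_induction_on with
  | refl =>
    intro e r hr
    exact absurd (congrArg FreeMonoid.toList hr) (by simp [FreeMonoid.toList_mul])
  | head hstep hrest ih =>
    intro e r hr
    obtain ⟨a, b, f, hx, rfl⟩ := hstep
    rw [hr] at hx
    -- hx : of e * r = a * (of f * of (bar f)) * b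
    rcases ha : FreeMonoid.toList a with _ | ⟨e', as⟩
    · -- a = 1 : e r = f f̄ b
      have ha1 : a = 1 := freeMonoid_ext (by simp [ha])
      subst ha1
      rw [one_mul] at hx
      have hlist : e :: FreeMonoid.toList r = f :: bar f :: FreeMonoid.toList b := by
        have := congrArg FreeMonoid.toList hx
        simpa [FreeMonoid.toList_mul] using this
      have hef : e = f := ((List.cons.injEq _ _ _ _).mp hlist).1
      have hrb : r = FreeMonoid.of (bar e) * b := by
        apply freeMonoid_ext
        have h2 := ((List.cons.injEq _ _ _ _).mp hlist).2
        rw [hef]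
        simpa [FreeMonoid.toList_mul] using h2
      exact ⟨1, b, by rw [hrb, one_mul], Relation.ReflTransGen.refl, by
        simpa using hrest⟩
    · -- a = e' :: as ; necessarily e' = e
      have haa : a = FreeMonoid.of e' * FreeMonoid.ofList as := freeMonoid_ext (by simp [ha])
      have hlist : e :: FreeMonoid.toList r
          = e' :: (as ++ [f, bar f] ++ FreeMonoid.toList b) := by
        have := congrArg FreeMonoid.toList hx
        rw [haa] at this
        simpa [FreeMonoid.toList_mul] using this
      have hee : e = e' := ((List.cons.injEq _ _ _ _).mp hlist).1
      subst hee
      have hrl : FreeMonoid.toList r = as ++ [f, bar f] ++ FreeMonoid.toList b :=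
        ((List.cons.injEq _ _ _ _).mp hlist).2
      -- apply IH to a * b = e (as ++ b)
      obtain ⟨s', t', hst, hs', ht'⟩ :=
        ih e (FreeMonoid.ofList as * b) (by rw [haa, mul_assoc])
      have hstl : as ++ FreeMonoid.toList b
          = FreeMonoid.toList s' ++ ((bar e) :: FreeMonoid.toList t') := by
        have := congrArg FreeMonoid.toList hst
        simpa [FreeMonoid.toList_mul] using this
      rcases List.append_eq_append_iff.mp hstl with ⟨c, hc1, hc2⟩ | ⟨c', hc1, hc2⟩
      · -- s' = as ++ c, b = c ++ ē t'
        refine ⟨FreeMonoid.ofList as * (FreeMonoid.of f * FreeMonoid.of (bar f)) *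
            FreeMonoid.ofList c, t', ?_, ?_, ht'⟩
        · apply freeMonoid_ext
          simp only [FreeMonoid.toList_mul, FreeMonoid.toList_ofList, FreeMonoid.toList_of]
          rw [hrl, hc2]; simp
        · have hdel : DelStep bar
              (FreeMonoid.ofList as * (FreeMonoid.of f * FreeMonoid.of (bar f)) *
                FreeMonoid.ofList c) s' :=
            ⟨FreeMonoid.ofList as, FreeMonoid.ofList c, f, rfl, by
              apply freeMonoid_ext
              simp [FreeMonoid.toList_mul, hc1]⟩
          exact Relation.ReflTransGen.head hdel hs'
      · -- as = s' ++ c', ē :: t' = c' ++ b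
        rcases hc : c' with _ | ⟨e₀, d⟩
        · -- c' = [] : as = s', b = ē t'
          subst hc
          simp only [List.append_nil] at hc1
          simp only [List.nil_append] at hc2
          refine ⟨FreeMonoid.ofList as * (FreeMonoid.of f * FreeMonoid.of (bar f)),
            t', ?_, ?_, ht'⟩
          · apply freeMonoid_ext
            simp only [FreeMonoid.toList_mul, FreeMonoid.toList_ofList, FreeMonoid.toList_of]
            rw [hrl, ← hc2]; simp
          · have hdel : DelStep bar
                (FreeMonoid.ofList as * (FreeMonoid.of f * FreeMonoid.of (bar f))) s' :=
              ⟨FreeMonoid.ofList as, 1, f, by rw [mul_one], by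
                apply freeMonoid_ext
                simp [FreeMonoid.toList_mul, hc1]⟩
            exact Relation.ReflTransGen.head hdel hs'
        · -- c' = e₀ :: d with e₀ = bar e, as = s' ē d, t' = d ++ b
          subst hc
          have he₀ : e₀ = bar e := (((List.cons.injEq _ _ _ _).mp hc2).1).symm
          have ht'd : FreeMonoid.toList t' = d ++ FreeMonoid.toList b :=
            ((List.cons.injEq _ _ _ _).mp hc2).2
          refine ⟨s', FreeMonoid.ofList d * (FreeMonoid.of f * FreeMonoid.of (bar f)) * b,
            ?_, hs', ?_⟩
          · apply freeMonoid_ext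
            simp only [FreeMonoid.toList_mul, FreeMonoid.toList_ofList, FreeMonoid.toList_of]
            rw [hrl, hc1, he₀]; simp
          · have hdel : DelStep bar
                (FreeMonoid.ofList d * (FreeMonoid.of f * FreeMonoid.of (bar f)) * b)
                t' := ⟨FreeMonoid.ofList d, b, f, rfl, by
                  apply freeMonoid_ext
                  simp [FreeMonoid.toList_mul, ht'd]⟩
            exact Relation.ReflTransGen.head hdel ht'

lemma main_aux (hbar : ∀ e, bar (bar e) = e) :
    ∀ n : ℕ, ∀ x : FreeMonoid E, (FreeMonoid.toList x).length ≤ n →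
      Relation.ReflTransGen (DelStep bar) x 1 →
      ∃ L : List (FreeMonoid E),
        Relation.ReflTransGen (InsStep bar) x (good bar L) := by
  intro n
  induction n with
  | zero =>
    intro x hlen _
    have : x = 1 := freeMonoid_ext (by simpa using List.length_eq_zero_iff.mp (Nat.le_zero.mp hlen))
    exact ⟨[], this ▸ Relation.ReflTransGen.refl⟩
  | succ n ih =>
    intro x hlen hx
    rcases hxl : FreeMonoid.toList x with _ | ⟨e, rest⟩
    · have : x = 1 := freeMonoid_ext (by simp [hxl])
      exact ⟨[], this ▸ Relation.ReflTransGen.refl⟩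
    · have hxe : x = FreeMonoid.of e * FreeMonoid.ofList rest :=
        freeMonoid_ext (by simp [hxl, FreeMonoid.toList_mul])
      obtain ⟨s, t, hst, hs, ht⟩ := split_lemma bar hx e (FreeMonoid.ofList rest) hxe
      have hlens := congrArg (fun z => (FreeMonoid.toList z).length) hst
      simp only [FreeMonoid.toList_mul, FreeMonoid.toList_ofList, FreeMonoid.toList_of,
        List.length_append, List.length_cons, List.length_nil] at hlens
      have hxlen : rest.length + 1 ≤ n + 1 := by
        rw [hxl] at hlen; simpa using hlen
      have hslen : (FreeMonoid.toList s).length ≤ n := by omega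
      have htlen : (FreeMonoid.toList t).length ≤ n := by omega
      obtain ⟨Ls, hLs⟩ := ih s hslen hs
      obtain ⟨Lt, hLt⟩ := ih t htlen ht
      obtain ⟨L', hL'⟩ := conj_good bar hbar Ls e
      refine ⟨L' ++ Lt, ?_⟩
      rw [good_append]
      have step1 : Relation.ReflTransGen (InsStep bar) x
          ((FreeMonoid.of e * good bar Ls * FreeMonoid.of (bar e)) * good bar Lt) := by
        rw [hxe, hst]
        have : FreeMonoid.of e * (s * FreeMonoid.of (bar e) * t)
            = (FreeMonoid.of e * s * FreeMonoid.of (bar e)) * t := by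
          simp only [mul_assoc]
        rw [this]
        exact ins_rtg_mul bar
          (ins_rtg_mul bar (ins_rtg_mul_left bar _ hLs) Relation.ReflTransGen.refl) hLt
      exact step1.trans (ins_rtg_mul_right bar _ hL')

end Aux

/-- If a word `x` in the free monoid on `E` maps to `1` in the free group on `E`
(i.e. it reduces to the empty word by cancellations of adjacent pairs `ē e` or
`e ē`), then finitely many insertions of subwords `ē e` transform `x` into a
word of the form `(ū₁ u₁)(ū₂ u₂)⋯(ū_q u_q)`. -/
theorem stmt_14 (E : Type*) (bar : E → E) (hbar : ∀ e, bar (bar e) = e)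
    (x : FreeMonoid E)
    (hx : Relation.ReflTransGen (DelStep bar) x 1) :
    ∃ x' : FreeMonoid E,
      Relation.ReflTransGen (InsStep bar) x x' ∧
      ∃ L : List (FreeMonoid E),
        x' = (L.map (fun u => barWord bar u * u)).prod := by
  obtain ⟨L, hL⟩ := main_aux bar hbar (FreeMonoid.toList x).length x le_rfl hx
  exact ⟨good bar L, hL, L, rfl⟩
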